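/- For α > 0, ζ > 0, real s with ζ + 1 - s > 0, and f : (0,∞) → ℝ nonnegative with finite Mellin transform f*(s) = ∫₀^∞ v^{s-1} f(v) dv, the Mellin transform of the Kober operator of the first kind I_u^{ζ,α} f = (u^{-ζ-α}/Γ(α)) ∫₀^u (u-v)^{α-1} v^ζ f(v) dv satisfies ∫₀^∞ u^{s-1} (I_u^{ζ,α} f)(u) du = (Γ(ζ+1-s)/Γ(α+ζ+1-s)) f*(s). -/

import Mathlib

open MeasureTheory Set Real

/-- Kober fractional integral operator of the first kind. -/
noncomputable def koberFirst (ζ α : ℝ) (f : ℝ → ℝ) (u : ℝ) : ℝ :=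
  (u ^ (-ζ - α) / Real.Gamma α) * ∫ v in Set.Ioo (0:ℝ) u, (u - v) ^ (α - 1) * v ^ ζ * f v

lemma realBetaIoo {a b : ℝ} (ha : 0 < a) (hb : 0 < b) :
    ∫ t in Set.Ioo (0:ℝ) 1, t ^ (a - 1) * (1 - t) ^ (b - 1) =
      Real.Gamma a * Real.Gamma b / Real.Gamma (a + b) := by
  have key := Complex.Gamma_mul_Gamma_eq_betaIntegral (s := (a:ℂ)) (t := (b:ℂ))
      (by simpa using ha) (by simpa using hb)
  have hbeta : Complex.betaIntegral (a:ℂ) (b:ℂ)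
      = ((∫ t in (0:ℝ)..1, t ^ (a - 1) * (1 - t) ^ (b - 1)) : ℝ) := by
    rw [Complex.betaIntegral, ← intervalIntegral.integral_ofReal]
    refine intervalIntegral.integral_congr fun x hx => ?_
    rw [Set.uIcc_of_le zero_le_one] at hx
    rw [show ((a:ℂ) - 1) = ((a-1:ℝ):ℂ) by push_cast; ring,
      show ((b:ℂ) - 1) = ((b-1:ℝ):ℂ) by push_cast; ring,
      show (1 - (x:ℂ)) = ((1-x:ℝ):ℂ) by push_cast; ring,
      ← Complex.ofReal_cpow hx.1, ← Complex.ofReal_cpow (by linarith [hx.2] : (0:ℝ) ≤ 1 - x)]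
    norm_cast
  rw [hbeta, Complex.Gamma_ofReal, Complex.Gamma_ofReal, ← Complex.ofReal_add,
    Complex.Gamma_ofReal, ← Complex.ofReal_mul, ← Complex.ofReal_mul] at key
  have key' : Real.Gamma a * Real.Gamma b
      = Real.Gamma (a + b) * ∫ t in (0:ℝ)..1, t ^ (a - 1) * (1 - t) ^ (b - 1) :=
    Complex.ofReal_injective key
  have hG : Real.Gamma (a + b) ≠ 0 := (Real.Gamma_pos_of_pos (by linarith)).ne'
  rw [← MeasureTheory.integral_Ioc_eq_integral_Ioo, ← intervalIntegral.integral_of_le zero_le_one]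
  field_simp
  linarith [key']

lemma J_eq (α ζ s : ℝ) {v : ℝ} (hv : 0 < v) :
    ∫ u in Set.Ioi v, u ^ (s - ζ - α - 1) * (u - v) ^ (α - 1) =
      v ^ (s - ζ - 1) * ∫ t in Set.Ioo (0:ℝ) 1, t ^ (α - 1) * (1 - t) ^ (ζ - s) := by
  have himg : (fun t : ℝ => v / (1 - t)) '' Set.Ioo 0 1 = Set.Ioi v := by
    ext u
    simp only [Set.mem_image, Set.mem_Ioo, Set.mem_Ioi]
    constructor
    · rintro ⟨t, ⟨ht0, ht1⟩, rfl⟩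
      have h1 : 0 < 1 - t := by linarith
      rw [lt_div_iff₀ h1]
      nlinarith
    · intro hu
      have hu0 : 0 < u := lt_trans hv hu
      refine ⟨1 - v / u, ⟨?_, ?_⟩, ?_⟩
      · have : v / u < 1 := (div_lt_one hu0).2 hu
        linarith
      · have : 0 < v / u := div_pos hv hu0
        linarith
      · field_simp
        rw [sub_sub_cancel, div_self hv.ne']
  have hderiv : ∀ t ∈ Set.Ioo (0:ℝ) 1,
      HasDerivWithinAt (fun t : ℝ => v / (1 - t)) (v / (1 - t) ^ 2) (Set.Ioo 0 1) t := by
    intro t ht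
    have h1 : (1 : ℝ) - t ≠ 0 := by rw [Set.mem_Ioo] at ht; intro h; linarith [ht.2]
    have hd : HasDerivAt (fun t : ℝ => 1 - t) (-1) t := by
      simpa using (hasDerivAt_id' t).const_sub (1:ℝ)
    have := (hasDerivAt_const t v).div hd h1
    have heq : (0 * (1 - t) - v * (-1)) / ((1 - t) ^ 2) = v / (1 - t) ^ 2 := by ring
    rw [heq] at this
    exact this.hasDerivWithinAt
  have hinj : Set.InjOn (fun t : ℝ => v / (1 - t)) (Set.Ioo 0 1) := by
    intro t1 h1 t2 h2 heq
    simp only [Set.mem_Ioo] at h1 h2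
    have e1 : (1:ℝ) - t1 ≠ 0 := by intro h; linarith [h1.2]
    have e2 : (1:ℝ) - t2 ≠ 0 := by intro h; linarith [h2.2]
    simp only at heq
    rw [div_eq_div_iff e1 e2] at heq
    have := mul_left_cancel₀ hv.ne' heq
    linarith
  rw [← himg, integral_image_eq_integral_abs_deriv_smul measurableSet_Ioo hderiv hinj
    (fun u => u ^ (s - ζ - α - 1) * (u - v) ^ (α - 1)), ← integral_const_mul]
  refine setIntegral_congr_fun measurableSet_Ioo fun t ht => ?_
  obtain ⟨ht0, ht1⟩ := ht
  have hA : (0:ℝ) < 1 - t := by linarith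
  have habs : |v / (1 - t) ^ 2| = v / (1 - t) ^ 2 := abs_of_pos (by positivity)
  have hsub : v / (1 - t) - v = v * t / (1 - t) := by field_simp; ring
  have e1 : v / (1 - t) ^ 2 = v ^ (1:ℝ) * (1 - t) ^ (-2:ℝ) := by
    rw [Real.rpow_one, show (-2:ℝ) = -((2:ℕ):ℝ) by norm_num, Real.rpow_neg hA.le,
      Real.rpow_natCast, div_eq_mul_inv]
  have e2 : (v / (1 - t)) ^ (s - ζ - α - 1)
      = v ^ (s - ζ - α - 1) * (1 - t) ^ (-(s - ζ - α - 1)) := by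
    rw [Real.div_rpow hv.le hA.le, Real.rpow_neg hA.le, div_eq_mul_inv]
  have e3 : (v * t / (1 - t)) ^ (α - 1)
      = v ^ (α - 1) * t ^ (α - 1) * (1 - t) ^ (-(α - 1)) := by
    rw [Real.div_rpow (by positivity) hA.le, Real.mul_rpow hv.le ht0.le,
      Real.rpow_neg hA.le, div_eq_mul_inv]
  simp only [smul_eq_mul]
  rw [habs, hsub, e1, e2, e3]
  have c1 : v ^ (1:ℝ) * v ^ (s - ζ - α - 1) * v ^ (α - 1) = v ^ (s - ζ - 1) := by
    rw [← Real.rpow_add hv, ← Real.rpow_add hv]; ring_nf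
  have c2 : (1 - t) ^ (-2:ℝ) * (1 - t) ^ (-(s - ζ - α - 1)) * (1 - t) ^ (-(α - 1))
      = (1 - t) ^ (ζ - s) := by
    rw [← Real.rpow_add hA, ← Real.rpow_add hA]; ring_nf
  calc v ^ (1:ℝ) * (1 - t) ^ (-2:ℝ)
        * (v ^ (s - ζ - α - 1) * (1 - t) ^ (-(s - ζ - α - 1))
          * (v ^ (α - 1) * t ^ (α - 1) * (1 - t) ^ (-(α - 1))))
      = (v ^ (1:ℝ) * v ^ (s - ζ - α - 1) * v ^ (α - 1))
        * ((1 - t) ^ (-2:ℝ) * (1 - t) ^ (-(s - ζ - α - 1)) * (1 - t) ^ (-(α - 1)))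
        * t ^ (α - 1) := by ring
    _ = v ^ (s - ζ - 1) * (t ^ (α - 1) * (1 - t) ^ (ζ - s)) := by rw [c1, c2]; ring

theorem stmt13 (α ζ s : ℝ) (hα : 0 < α) (hζ : 0 < ζ) (hs : 0 < ζ + 1 - s)
    (f : ℝ → ℝ) (hf_nonneg : ∀ x, 0 ≤ f x) (hf_meas : Measurable f)
    (hf_mellin : IntegrableOn (fun v => v ^ (s - 1) * f v) (Set.Ioi 0))
    (hFubini : IntegrableOn
      (fun p : ℝ × ℝ => p.1 ^ (s - 1) * (p.1 ^ (-ζ - α) / Real.Gamma α) *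
        ((p.1 - p.2) ^ (α - 1) * p.2 ^ ζ * f p.2))
      {p : ℝ × ℝ | 0 < p.2 ∧ p.2 < p.1}) :
    ∫ u in Set.Ioi (0:ℝ), u ^ (s - 1) * koberFirst ζ α f u =
      (Real.Gamma (ζ + 1 - s) / Real.Gamma (α + ζ + 1 - s)) *
        ∫ v in Set.Ioi (0:ℝ), v ^ (s - 1) * f v := by
  set F : ℝ × ℝ → ℝ := fun p => p.1 ^ (s - 1) * (p.1 ^ (-ζ - α) / Real.Gamma α) *
      ((p.1 - p.2) ^ (α - 1) * p.2 ^ ζ * f p.2) with hF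
  set S : Set (ℝ × ℝ) := {p : ℝ × ℝ | 0 < p.2 ∧ p.2 < p.1} with hSdef
  have hS : MeasurableSet S := by
    have : S = {p : ℝ × ℝ | 0 < p.2} ∩ {p : ℝ × ℝ | p.2 < p.1} := by
      ext p; simp [hSdef, Set.mem_setOf_eq]
    rw [this]
    exact (measurableSet_lt measurable_const measurable_snd).inter
      (measurableSet_lt measurable_snd measurable_fst)
  have hInd : Integrable (S.indicator F) := (integrable_indicator_iff hS).2 hFubini
  have hswap : ∫ u, ∫ v, S.indicator F (u, v) = ∫ v, ∫ u, S.indicator F (u, v) := by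
    apply MeasureTheory.integral_integral_swap
    exact hInd
  have hGα : Real.Gamma α ≠ 0 := (Real.Gamma_pos_of_pos hα).ne'
  have hB : (∫ t in Set.Ioo (0:ℝ) 1, t ^ (α - 1) * (1 - t) ^ (ζ - s))
      = Real.Gamma α * Real.Gamma (ζ + 1 - s) / Real.Gamma (α + ζ + 1 - s) := by
    have := realBetaIoo hα hs
    rw [show ζ + 1 - s - 1 = ζ - s by ring] at this
    rw [this, show α + (ζ + 1 - s) = α + ζ + 1 - s by ring]
  calc ∫ u in Set.Ioi (0:ℝ), u ^ (s - 1) * koberFirst ζ α f u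
      = ∫ u in Set.Ioi (0:ℝ), ∫ v, S.indicator F (u, v) := by
        refine setIntegral_congr_fun measurableSet_Ioi fun u _ => ?_
        have h1 : u ^ (s - 1) * koberFirst ζ α f u
            = ∫ v in Set.Ioo (0:ℝ) u, F (u, v) := by
          unfold koberFirst
          rw [← mul_assoc, ← integral_const_mul]
        rw [h1, ← integral_indicator measurableSet_Ioo]
        congr 1
    _ = ∫ u, ∫ v, S.indicator F (u, v) := by
        apply setIntegral_eq_integral_of_forall_compl_eq_zero
        intro u hu
        simp only [Set.mem_Ioi, not_lt] at hu
        have : ∀ v, S.indicator F (u, v) = 0 := by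
          intro v
          apply Set.indicator_of_notMem
          simp only [hSdef, Set.mem_setOf_eq, not_and]
          intro hv; linarith
        simp [this]
    _ = ∫ v, ∫ u, S.indicator F (u, v) := hswap
    _ = ∫ v in Set.Ioi (0:ℝ), ∫ u, S.indicator F (u, v) := by
        symm
        apply setIntegral_eq_integral_of_forall_compl_eq_zero
        intro v hv
        simp only [Set.mem_Ioi, not_lt] at hv
        have : ∀ u, S.indicator F (u, v) = 0 := by
          intro u
          apply Set.indicator_of_notMem
          simp only [hSdef, Set.mem_setOf_eq, not_and]
          intro hv'; linarith
        simp [this]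
    _ = ∫ v in Set.Ioi (0:ℝ),
          (Real.Gamma (ζ + 1 - s) / Real.Gamma (α + ζ + 1 - s)) * (v ^ (s - 1) * f v) := by
        refine setIntegral_congr_fun measurableSet_Ioi fun v hv => ?_
        rw [Set.mem_Ioi] at hv
        have h2 : (fun u => S.indicator F (u, v))
            = (Set.Ioi v).indicator (fun u => F (u, v)) := by
          funext u
          by_cases h : v < u
          · rw [Set.indicator_of_mem (by exact ⟨hv, h⟩),
              Set.indicator_of_mem (Set.mem_Ioi.2 h)]
          · rw [Set.indicator_of_notMem (by simp [hSdef, Set.mem_setOf_eq]; intro; exact le_of_not_gt h),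
              Set.indicator_of_notMem (by simp only [Set.mem_Ioi]; exact h)]
        rw [h2, integral_indicator measurableSet_Ioi]
        have h3 : ∫ u in Set.Ioi v, F (u, v)
            = ∫ u in Set.Ioi v,
                (v ^ ζ * f v / Real.Gamma α) * (u ^ (s - ζ - α - 1) * (u - v) ^ (α - 1)) := by
          refine setIntegral_congr_fun measurableSet_Ioi fun u hu => ?_
          rw [Set.mem_Ioi] at hu
          have hu0 : 0 < u := lt_trans hv hu
          simp only [hF]
          rw [show s - ζ - α - 1 = (s - 1) + (-ζ - α) by ring, Real.rpow_add hu0]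
          ring
        rw [h3, integral_const_mul, J_eq α ζ s hv, hB]
        have hvv : v ^ ζ * v ^ (s - ζ - 1) = v ^ (s - 1) := by
          rw [← Real.rpow_add hv]; ring_nf
        have hG2 : Real.Gamma (α + ζ + 1 - s) ≠ 0 :=
          (Real.Gamma_pos_of_pos (by linarith)).ne'
        field_simp
        rw [← hvv]
        ring
    _ = (Real.Gamma (ζ + 1 - s) / Real.Gamma (α + ζ + 1 - s)) *
          ∫ v in Set.Ioi (0:ℝ), v ^ (s - 1) * f v := integral_const_mul _ _
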